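/- Let m be a fast sequence, Ē = (E_i) a sequence of graphs good for m with threshold i*, and ξ : ℕ → {0,1} a function with ξ⁻¹{1} infinite and ξ(i) = 0 for all i < i*; let T_k and R_k be as in the parameter construction. Then for every k ∈ ℕ, every ν ∈ T_k, every s ≤ k, and all ρ_0,…,ρ_{s−1} ∈ T_{k+1} such that (ν, ρ_i↾k) ∈ R_k for every i < s, the set { t < m(k) : (ν⌢⟨t⟩, ρ_i) ∈ R_{k+1} for every i < s } has at least k+1 elements. -/

import Mathlib

/-- `mCirc m i = ∏_{j<i} m j` (so `mCirc m 0 = 1`). -/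
def mCirc (m : ℕ → ℕ) (i : ℕ) : ℕ := ∏ j ∈ Finset.range i, m j

/-- A *fast sequence* is `m : ℕ → ℕ` with `m 0 ≥ 2` and
`m i ≥ ((m°(i))^(i^i))^(4·(m°(i))^(i^i))` for all `i`. -/
def FastSeq (m : ℕ → ℕ) : Prop :=
  2 ≤ m 0 ∧ ∀ i, (mCirc m i ^ i ^ i) ^ (4 * mCirc m i ^ i ^ i) ≤ m i

/-- `Ē = (E_i)` is a *good sequence of graphs for `m` with threshold `i*`*. -/
def GoodFor (m : ℕ → ℕ) (E : ∀ i : ℕ, Fin (m i) → Fin (m i) → Prop)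
    (istar : ℕ) : Prop :=
  (∀ i, ∀ s t : Fin (m i), E i s t → E i t s) ∧
  (∀ s t : Fin (m 0), E 0 s t) ∧
  ∀ i, istar ≤ i →
    (∀ u : Finset (Fin (m i)), u.card ≤ mCirc m i ^ i ^ i →
      ∃ s : Fin (m i), ∀ t ∈ u, E i s t) ∧
    (∀ u : Finset (Fin (m i)), m i ≤ u.card * mCirc m i ^ i ^ i →
      ¬ ∃ s : Fin (m i), ∀ t ∈ u, E i s t)

/-- The `k`-th level of the tree: sequences `η` of length `k` with `η j < m j`. -/
def TreeLevel (m : ℕ → ℕ) (k : ℕ) : Type := (j : Fin k) → Fin (m j)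

/-- Restriction `η ↾ k` of a sequence of length `k+1`. -/
def restrict {m : ℕ → ℕ} {k : ℕ} (η : TreeLevel m (k + 1)) : TreeLevel m k :=
  fun j => η j.castSucc

/-- Extension `ν⌢⟨t⟩` of a sequence `ν` of length `k` by a last value `t < m k`. -/
def extendSeq {m : ℕ → ℕ} {k : ℕ} (ν : TreeLevel m k) (t : Fin (m k)) :
    TreeLevel m (k + 1) :=
  Fin.snoc (α := fun j : Fin (k + 1) => Fin (m j)) ν t

/-- The relations `R_k` of the parameter construction:
`R_0` holds of the pair of empty sequences, and `(η₁,η₂) ∈ R_{k+1}` iff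
`(η₁↾k, η₂↾k) ∈ R_k` and, in case `ξ k = 1`, additionally `(η₁ k, η₂ k) ∈ E_k`. -/
def Rrel (m : ℕ → ℕ) (E : ∀ i : ℕ, Fin (m i) → Fin (m i) → Prop)
    (ξ : ℕ → Bool) : ∀ k : ℕ, TreeLevel m k → TreeLevel m k → Prop
  | 0 => fun _ _ => True
  | k + 1 => fun η₁ η₂ =>
      Rrel m E ξ k (restrict η₁) (restrict η₂) ∧
      (ξ k = true → E k (η₁ (Fin.last k)) (η₂ (Fin.last k)))

lemma fast_one_le (m : ℕ → ℕ) (hm : FastSeq m) : ∀ j, 1 ≤ m j := by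
  intro j
  induction j using Nat.strong_induction_on with
  | _ j ih =>
    rcases j with _ | j
    · exact le_trans one_le_two hm.1
    · have hcirc : 0 < mCirc m (j + 1) :=
        Finset.prod_pos (fun i hi => ih i (Finset.mem_range.mp hi))
      calc 1 ≤ (mCirc m (j+1) ^ (j+1) ^ (j+1)) ^ (4 * mCirc m (j+1) ^ (j+1) ^ (j+1)) :=
            Nat.one_le_pow _ _ (Nat.pow_pos hcirc)
        _ ≤ m (j + 1) := hm.2 (j + 1)

lemma fast_X_ge (m : ℕ → ℕ) (hm : FastSeq m) (k : ℕ) :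
    k + 1 ≤ mCirc m k ^ k ^ k := by
  rcases k with _ | j
  · simp [mCirc]
  · set k := j + 1
    have h2 : 2 ≤ mCirc m k := by
      have : mCirc m k = (∏ i ∈ Finset.range j, m (i + 1)) * m 0 :=
        Finset.prod_range_succ' m j
      rw [this]
      calc 2 = 1 * 2 := by ring
        _ ≤ (∏ i ∈ Finset.range j, m (i + 1)) * m 0 :=
          Nat.mul_le_mul (Nat.succ_le_of_lt
            (Finset.prod_pos (fun i _ => fast_one_le m hm (i+1)))) hm.1
    calc k + 1 ≤ 2 ^ k := Nat.lt_two_pow_self (n := k)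
      _ ≤ 2 ^ k ^ k := Nat.pow_le_pow_right (by norm_num)
            (Nat.le_self_pow (Nat.succ_ne_zero j) k)
      _ ≤ mCirc m k ^ k ^ k := Nat.pow_le_pow_left h2 _

lemma fast_X_le_m (m : ℕ → ℕ) (hm : FastSeq m) (k : ℕ) :
    mCirc m k ^ k ^ k ≤ m k := by
  have hX : 0 < mCirc m k ^ k ^ k :=
    Nat.pow_pos (Finset.prod_pos (fun i _ => fast_one_le m hm i))
  calc mCirc m k ^ k ^ k
      ≤ (mCirc m k ^ k ^ k) ^ (4 * mCirc m k ^ k ^ k) :=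
        Nat.le_self_pow (by positivity) _
    _ ≤ m k := hm.2 k

/-- If `s ≤ k`, `ν ∈ T_k`, and `ρ_0,…,ρ_{s−1} ∈ T_{k+1}` with `(ν, ρ_i↾k) ∈ R_k`
for all `i < s`, then the set `{t < m k : (ν⌢⟨t⟩, ρ_i) ∈ R_{k+1} for all i < s}`
has at least `k+1` elements. -/
theorem parameter_many_extensions (m : ℕ → ℕ) (hm : FastSeq m)
    (E : ∀ i : ℕ, Fin (m i) → Fin (m i) → Prop) (istar : ℕ)
    (hE : GoodFor m E istar) (ξ : ℕ → Bool)
    (hξinf : {i : ℕ | ξ i = true}.Infinite)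
    (hξ0 : ∀ i < istar, ξ i = false)
    (k : ℕ) (ν : TreeLevel m k) (s : ℕ) (hs : s ≤ k)
    (ρ : Fin s → TreeLevel m (k + 1))
    (hρ : ∀ i : Fin s, Rrel m E ξ k ν (restrict (ρ i))) :
    k + 1 ≤ Set.ncard
      {t : Fin (m k) | ∀ i : Fin s, Rrel m E ξ (k + 1) (extendSeq ν t) (ρ i)} := by
  classical
  have hX1 : k + 1 ≤ mCirc m k ^ k ^ k := fast_X_ge m hm k
  have hXm : mCirc m k ^ k ^ k ≤ m k := fast_X_le_m m hm k
  set X := mCirc m k ^ k ^ k with hXdef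
  have hmk : k + 1 ≤ m k := le_trans hX1 hXm
  have hrw : ∀ (t : Fin (m k)) (i : Fin s),
      Rrel m E ξ (k + 1) (extendSeq ν t) (ρ i) ↔
        (ξ k = true → E k t (ρ i (Fin.last k))) := by
    intro t i
    have hres : restrict (extendSeq ν t) = ν := by
      funext j
      simp [restrict, extendSeq, Fin.snoc_castSucc]
      exact Fin.snoc_castSucc (α := fun j : Fin (k + 1) => Fin (m j)) ..
    have hlast : (extendSeq ν t) (Fin.last k) = t := by
      simp [extendSeq, Fin.snoc_last]
      exact Fin.snoc_last (α := fun j : Fin (k + 1) => Fin (m j)) ..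
    constructor
    · rintro ⟨_, h⟩
      rw [← hlast]; exact h
    · intro h
      exact ⟨by rw [hres]; exact hρ i, by rw [hlast]; exact h⟩
  cases hxk : ξ k with
  | false =>
    have huniv : {t : Fin (m k) | ∀ i : Fin s,
        Rrel m E ξ (k + 1) (extendSeq ν t) (ρ i)} = Set.univ := by
      apply Set.eq_univ_of_forall
      intro t i
      exact (hrw t i).mpr (fun h => absurd h (by simp [hxk]))
    rw [huniv, Set.ncard_univ, Nat.card_eq_fintype_card, Fintype.card_fin]
    exact hmk
  | true =>
    have hik : istar ≤ k := by
      by_contra h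
      push_neg at h
      have := hξ0 k h
      rw [hxk] at this
      exact Bool.noConfusion this
    obtain ⟨hgood1, hgood2⟩ := hE.2.2 k hik
    set A : Finset (Fin (m k)) :=
      Finset.univ.filter (fun t => ∀ i : Fin s, E k t (ρ i (Fin.last k))) with hAdef
    have hset : {t : Fin (m k) | ∀ i : Fin s,
        Rrel m E ξ (k + 1) (extendSeq ν t) (ρ i)} = ↑A := by
      ext t
      simp only [Set.mem_setOf_eq, Finset.coe_filter, Finset.mem_univ, true_and,
        hAdef, Set.mem_setOf_eq]
      constructor
      · intro h i; exact (hrw t i).mp (h i) hxk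
      · intro h i; exact (hrw t i).mpr (fun _ => h i)
    rw [hset, Set.ncard_coe_finset]
    by_contra hcard
    push_neg at hcard
    have hAk : A.card ≤ k := Nat.lt_succ_iff.mp hcard
    set N : Fin (m k) → Finset (Fin (m k)) :=
      fun a => Finset.univ.filter (fun t => E k a t) with hNdef
    have hN : ∀ w : Fin (m k), (N w).card * X < m k := by
      intro w
      by_contra hle
      push_neg at hle
      exact hgood2 (N w) hle ⟨w, fun t ht => (Finset.mem_filter.mp ht).2⟩
    set T : Finset (Fin (m k)) := A.biUnion N with hTdef
    have hmkpos : 0 < m k := lt_of_lt_of_le (Nat.succ_pos k) hmk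
    have hXpos : 0 < X := lt_of_lt_of_le (Nat.succ_pos k) hX1
    have hT : T.card < m k := by
      have h1 : T.card * X ≤ ∑ a ∈ A, (N a).card * X := by
        calc T.card * X ≤ (∑ a ∈ A, (N a).card) * X :=
              Nat.mul_le_mul_right X Finset.card_biUnion_le
          _ = ∑ a ∈ A, (N a).card * X := Finset.sum_mul ..
      have h2 : ∑ a ∈ A, (N a).card * X ≤ A.card * (m k - 1) := by
        calc ∑ a ∈ A, (N a).card * X ≤ ∑ _a ∈ A, (m k - 1) :=
              Finset.sum_le_sum (fun a _ => Nat.le_pred_of_lt (hN a))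
          _ = A.card * (m k - 1) := by rw [Finset.sum_const, smul_eq_mul]
      have h3 : A.card * (m k - 1) < X * m k := by
        calc A.card * (m k - 1) ≤ k * m k :=
              Nat.mul_le_mul hAk (Nat.sub_le _ _)
          _ < (k + 1) * m k := (Nat.mul_lt_mul_right hmkpos).mpr (Nat.lt_succ_self k)
          _ ≤ X * m k := Nat.mul_le_mul_right _ hX1
      have : T.card * X < m k * X := by
        calc T.card * X ≤ A.card * (m k - 1) := le_trans h1 h2
          _ < X * m k := h3
          _ = m k * X := Nat.mul_comm _ _
      exact Nat.lt_of_mul_lt_mul_right this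
    obtain ⟨w, hw⟩ : ∃ w, w ∉ T := by
      by_contra h
      push_neg at h
      have hTu : T = Finset.univ := Finset.eq_univ_of_forall h
      rw [hTu, Finset.card_univ, Fintype.card_fin] at hT
      exact lt_irrefl _ hT
    set u : Finset (Fin (m k)) :=
      (Finset.univ.image (fun i : Fin s => ρ i (Fin.last k))) ∪ {w} with hudef
    have hu : u.card ≤ X := by
      calc u.card ≤ (Finset.univ.image
            (fun i : Fin s => ρ i (Fin.last k))).card + ({w} : Finset _).card :=
            Finset.card_union_le _ _
        _ ≤ s + 1 := by
            have h1 : (Finset.univ.image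
                (fun i : Fin s => ρ i (Fin.last k))).card ≤ s := by
              calc _ ≤ (Finset.univ : Finset (Fin s)).card := Finset.card_image_le
                _ = s := by simp
            simpa using Nat.add_le_add h1 (le_refl 1)
        _ ≤ k + 1 := Nat.add_le_add_right hs 1
        _ ≤ X := hX1
    obtain ⟨s₀, hs₀⟩ := hgood1 u hu
    have hs₀A : s₀ ∈ A := by
      rw [hAdef, Finset.mem_filter]
      refine ⟨Finset.mem_univ _, fun i => ?_⟩
      apply hs₀
      exact Finset.mem_union_left _ (Finset.mem_image.mpr ⟨i, Finset.mem_univ i, rfl⟩)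
    have hwN : w ∈ N s₀ := by
      rw [hNdef, Finset.mem_filter]
      exact ⟨Finset.mem_univ _, hs₀ w (Finset.mem_union_right _ (Finset.mem_singleton_self w))⟩
    exact hw (Finset.mem_biUnion.mpr ⟨s₀, hs₀A, hwN⟩)
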